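/- Let H₁, H₂ be real Hilbert spaces, Q ⊆ H₁ an arbitrary subset, and f : Q → H₂ a 1-Lipschitz map. Then f extends to a 1-Lipschitz map F : H₁ → H₂ with F restricted to Q equal to f. -/

import Mathlib

open Set Metric Filter Topology

section
variable {E F : Type*} [NormedAddCommGroup E] [InnerProductSpace ℝ E]
  [NormedAddCommGroup F] [InnerProductSpace ℝ F] [CompleteSpace F]

local notation "⟪" a ", " b "⟫" => @inner ℝ _ _ a b

lemma paral_est
    {S : Set F} (hS : Convex ℝ S) {c u v : F} (hu : u ∈ S) (hv : v ∈ S)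
    {a b : ℝ} (hb : 0 ≤ b) (hbS : ∀ w ∈ S, b ≤ dist c w)
    (hua : dist c u ≤ a) (hva : dist c v ≤ a) :
    dist u v ^ 2 ≤ 4 * a ^ 2 - 4 * b ^ 2 := by
  have hm : midpoint ℝ u v ∈ S := hS.segment_subset hu hv (midpoint_mem_segment u v)
  have hpar := parallelogram_law_with_norm ℝ (u - c) (v - c)
  have h1 : u - c + (v - c) = (2:ℝ) • (midpoint ℝ u v - c) := by
    rw [midpoint_eq_smul_add, invOf_eq_inv]; module
  have h2 : u - c - (v - c) = u - v := by abel
  rw [h1, h2] at hpar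
  have h3 : ‖(2:ℝ) • (midpoint ℝ u v - c)‖ = 2 * ‖midpoint ℝ u v - c‖ := by
    rw [norm_smul]; simp
  rw [h3] at hpar
  have hdu : ‖u - c‖ ≤ a := by rwa [← dist_eq_norm, dist_comm]
  have hdv : ‖v - c‖ ≤ a := by rwa [← dist_eq_norm, dist_comm]
  have hdm : b ≤ ‖midpoint ℝ u v - c‖ := by
    rw [← dist_eq_norm, dist_comm]; exact hbS _ hm
  rw [dist_eq_norm]
  nlinarith [norm_nonneg (u - v), mul_self_le_mul_self hb hdm, hpar,
    mul_self_le_mul_self (norm_nonneg (u-c)) hdu, mul_self_le_mul_self (norm_nonneg (v-c)) hdv]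

lemma balls_inter_of_finite (M : Set (E × F)) (x : E)
    (hfin : ∀ T : Finset (E × F), ↑T ⊆ M → ∃ y : F, ∀ p ∈ T, ‖y - p.2‖ ≤ ‖x - p.1‖) :
    ∃ y : F, ∀ p ∈ M, ‖y - p.2‖ ≤ ‖x - p.1‖ := by
  classical
  rcases M.eq_empty_or_nonempty with rfl | ⟨p₀, hp₀⟩
  · exact ⟨0, fun p hp => absurd hp (notMem_empty p)⟩
  set D : Finset (E × F) → Set F := fun T => ⋂ p ∈ T, closedBall p.2 ‖x - p.1‖ with hD
  have hDmem : ∀ {T : Finset (E × F)} {y : F}, y ∈ D T ↔ ∀ p ∈ T, dist y p.2 ≤ ‖x - p.1‖ := by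
    intro T y; simp [hD, mem_iInter₂, mem_closedBall]
  have hDconv : ∀ T, Convex ℝ (D T) := fun T =>
    convex_iInter fun p => convex_iInter fun _ => convex_closedBall _ _
  have hDne : ∀ T : Finset (E × F), ↑T ⊆ M → (D T).Nonempty := by
    intro T hT
    obtain ⟨y, hy⟩ := hfin T hT
    exact ⟨y, hDmem.2 fun p hp => by rw [dist_eq_norm]; exact hy p hp⟩
  have hDmono : ∀ {T T' : Finset (E × F)}, T ⊆ T' → D T' ⊆ D T := by
    intro T T' hTT y hy
    exact hDmem.2 fun p hp => hDmem.1 hy p (hTT hp)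
  set dset : Set ℝ :=
    {d | ∃ T : Finset (E × F), ↑T ⊆ M ∧ p₀ ∈ T ∧ d = infDist p₀.2 (D T)} with hdset
  have hsub0 : (↑({p₀} : Finset (E × F)) : Set (E × F)) ⊆ M := by simpa using hp₀
  have hdsetne : dset.Nonempty := ⟨_, {p₀}, hsub0, Finset.mem_singleton_self p₀, rfl⟩
  have hbdd : BddAbove dset := by
    refine ⟨‖x - p₀.1‖, ?_⟩
    rintro d ⟨T, hTM, hTp₀, rfl⟩
    obtain ⟨y, hy⟩ := hDne T hTM
    exact le_trans (infDist_le_dist_of_mem hy)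
      (by rw [dist_comm]; exact hDmem.1 hy p₀ hTp₀)
  set d := sSup dset with hdd
  have hd0 : 0 ≤ d := le_trans infDist_nonneg
    (le_csSup hbdd ⟨{p₀}, hsub0, Finset.mem_singleton_self p₀, rfl⟩)
  set ε : ℕ → ℝ := fun n => 1 / (n + 1) with hε
  have hεpos : ∀ n, 0 < ε n := fun n => Nat.one_div_pos_of_nat
  -- choose finite sets approximating the sup
  have hTn : ∀ n : ℕ, ∃ T : Finset (E × F), ↑T ⊆ M ∧ p₀ ∈ T ∧
      d - ε n < infDist p₀.2 (D T) := by
    intro n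
    obtain ⟨e, he, hlt⟩ := exists_lt_of_lt_csSup hdsetne
      (show d - ε n < d by linarith [hεpos n])
    obtain ⟨T, hTM, hTp, rfl⟩ := he
    exact ⟨T, hTM, hTp, hlt⟩
  choose T hTM hTp hTd using hTn
  set G : ℕ → Finset (E × F) := fun n => (Finset.range (n + 1)).biUnion T with hG
  have hGM : ∀ n, ↑(G n) ⊆ M := by
    intro n y hy
    simp only [hG, Finset.coe_biUnion, Set.mem_iUnion] at hy
    obtain ⟨k, _, hk⟩ := hy
    exact hTM k hk
  have hGp₀ : ∀ n, p₀ ∈ G n := fun n =>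
    Finset.mem_biUnion.2 ⟨n, Finset.self_mem_range_succ n, hTp n⟩
  have hGmono : ∀ {n m : ℕ}, n ≤ m → G n ⊆ G m := by
    intro n m hnm
    exact Finset.biUnion_subset_biUnion_of_subset_left _
      (Finset.range_subset_range.2 (by omega))
  have hTG : ∀ n, T n ⊆ G n := fun n =>
    Finset.subset_biUnion_of_mem _ (Finset.self_mem_range_succ n)
  set a : ℕ → ℝ := fun n => infDist p₀.2 (D (G n)) with ha
  have hane : ∀ n, (D (G n)).Nonempty := fun n => hDne _ (hGM n)
  have halow : ∀ n, d - ε n < a n := fun n =>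
    lt_of_lt_of_le (hTd n) (infDist_le_infDist_of_subset (hDmono (hTG n)) (hane n))
  have hahigh : ∀ n, a n ≤ d := fun n =>
    le_csSup hbdd ⟨G n, hGM n, hGp₀ n, rfl⟩
  -- the points
  have hyn : ∀ n : ℕ, ∃ y ∈ D (G n), dist p₀.2 y < d + ε n := by
    intro n
    exact (infDist_lt_iff (hane n)).1 (lt_of_le_of_lt (hahigh n) (by linarith [hεpos n]))
  choose y hyD hyd using hyn
  set B : ℕ → ℝ := fun n => 4 * (d + ε n) ^ 2 - 4 * max (d - ε n) 0 ^ 2 with hB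
  have hpair : ∀ n : ℕ, ∀ u v : F, u ∈ D (G n) → v ∈ D (G n) →
      dist p₀.2 u ≤ d + ε n → dist p₀.2 v ≤ d + ε n → dist u v ≤ Real.sqrt (B n) := by
    intro n u v hu hv hud hvd
    have hbS : ∀ w ∈ D (G n), max (d - ε n) 0 ≤ dist p₀.2 w := by
      intro w hw
      exact max_le (le_trans (le_of_lt (halow n)) (infDist_le_dist_of_mem hw)) dist_nonneg
    have := paral_est (hDconv (G n)) hu hv (le_max_right _ _) hbS hud hvd
    calc dist u v = Real.sqrt (dist u v ^ 2) := (Real.sqrt_sq dist_nonneg).symm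
      _ ≤ Real.sqrt (B n) := Real.sqrt_le_sqrt this
  have hBtend : Tendsto (fun n => Real.sqrt (B n)) atTop (𝓝 0) := by
    have hεt : Tendsto ε atTop (𝓝 0) := tendsto_one_div_add_atTop_nhds_zero_nat
    have hc : Continuous fun e : ℝ => 4 * (d + e) ^ 2 - 4 * max (d - e) 0 ^ 2 :=
      (continuous_const.mul ((continuous_const.add continuous_id).pow 2)).sub
        (continuous_const.mul
          (((continuous_const.sub continuous_id).max continuous_const).pow 2))
    have hBt : Tendsto B atTop (𝓝 (4 * (d + 0) ^ 2 - 4 * max (d - 0) 0 ^ 2)) :=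
      (hc.tendsto 0).comp hεt
    have : (4 * (d + 0) ^ 2 - 4 * max (d - 0) 0 ^ 2) = 0 := by
      rw [add_zero, sub_zero, max_eq_left hd0]; ring
    rw [this] at hBt
    have := (Real.continuous_sqrt.tendsto 0).comp hBt
    simpa [Function.comp_def] using this
  have hcauchy : CauchySeq y := by
    apply cauchySeq_of_le_tendsto_0 (fun n => Real.sqrt (B n)) _ hBtend
    intro n m N hn hm
    have h1 : y n ∈ D (G N) := hDmono (hGmono hn) (hyD n)
    have h2 : y m ∈ D (G N) := hDmono (hGmono hm) (hyD m)
    have h3 : dist p₀.2 (y n) ≤ d + ε N := by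
      have : ε n ≤ ε N := by
        apply one_div_le_one_div_of_le
        · positivity
        · push_cast; have := (Nat.cast_le (α := ℝ)).2 hn; linarith
      linarith [hyd n]
    have h4 : dist p₀.2 (y m) ≤ d + ε N := by
      have : ε m ≤ ε N := by
        apply one_div_le_one_div_of_le
        · positivity
        · push_cast; have := (Nat.cast_le (α := ℝ)).2 hm; linarith
      linarith [hyd m]
    exact hpair N (y n) (y m) h1 h2 h3 h4
  obtain ⟨z, hz⟩ := cauchySeq_tendsto_of_complete hcauchy
  refine ⟨z, fun p hp => ?_⟩
  -- second sequence through D (G n ∪ {p})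
  have hyn' : ∀ n : ℕ, ∃ y' ∈ D (G n ∪ {p}), dist p₀.2 y' < d + ε n := by
    intro n
    have hsub : ↑(G n ∪ {p}) ⊆ M := by
      rw [Finset.coe_union]
      exact Set.union_subset (hGM n) (by simpa using hp)
    have hmem : infDist p₀.2 (D (G n ∪ {p})) ∈ dset :=
      ⟨G n ∪ {p}, hsub, Finset.mem_union_left _ (hGp₀ n), rfl⟩
    refine (infDist_lt_iff (hDne _ hsub)).1 ?_
    exact lt_of_le_of_lt (le_csSup hbdd hmem) (by linarith [hεpos n])
  choose y' hy'D hy'd using hyn'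
  have hclose : ∀ n, dist (y n) (y' n) ≤ Real.sqrt (B n) := by
    intro n
    exact hpair n (y n) (y' n) (hyD n) (hDmono Finset.subset_union_left (hy'D n))
      (le_of_lt (hyd n)) (le_of_lt (hy'd n))
  have hy'p : ∀ n, dist (y' n) p.2 ≤ ‖x - p.1‖ := fun n =>
    hDmem.1 (hy'D n) p (Finset.mem_union_right _ (Finset.mem_singleton_self p))
  have hineq : ∀ n, dist z p.2 ≤ dist z (y n) + Real.sqrt (B n) + ‖x - p.1‖ := by
    intro n
    calc dist z p.2 ≤ dist z (y n) + dist (y n) (y' n) + dist (y' n) p.2 :=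
          dist_triangle4 z (y n) (y' n) p.2
      _ ≤ dist z (y n) + Real.sqrt (B n) + ‖x - p.1‖ := by
          gcongr; exacts [hclose n, hy'p n]
  have htends : Tendsto (fun n => dist z (y n) + Real.sqrt (B n) + ‖x - p.1‖) atTop
      (𝓝 (dist z z + 0 + ‖x - p.1‖)) :=
    ((tendsto_const_nhds.dist hz).add hBtend).add tendsto_const_nhds
  rw [dist_self, zero_add, zero_add] at htends
  rw [← dist_eq_norm (z) p.2] at *
  exact ge_of_tendsto htends (Eventually.of_forall hineq)

lemma finite_balls_inter (T : Finset (E × F)) (x : E)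
    (hx : ∀ p ∈ T, p.1 ≠ x)
    (hT : ∀ p ∈ T, ∀ q ∈ T, ‖p.2 - q.2‖ ≤ ‖p.1 - q.1‖) :
    ∃ y : F, ∀ p ∈ T, ‖y - p.2‖ ≤ ‖x - p.1‖ := by
  classical
  rcases T.eq_empty_or_nonempty with rfl | hTne
  · exact ⟨0, by simp⟩
  have hrpos : ∀ p ∈ T, 0 < ‖x - p.1‖ := fun p hp =>
    norm_sub_pos_iff.2 (Ne.symm (hx p hp))
  set g : F → ℝ := fun y => T.sup' hTne fun p => ‖y - p.2‖ / ‖x - p.1‖ with hg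
  have hgcont : Continuous g :=
    Continuous.finset_sup'_apply hTne fun p _ =>
      ((continuous_id.sub continuous_const).norm).div_const _
  set K : Set F := convexHull ℝ ↑(T.image Prod.snd) with hK
  have hKcomp : IsCompact K := (T.image Prod.snd).finite_toSet.isCompact_convexHull ℝ
  have hKconv : Convex ℝ K := convex_convexHull _ _
  have hKne : K.Nonempty :=
    Set.Nonempty.mono (subset_convexHull ℝ _) (by simpa using hTne.image Prod.snd)
  obtain ⟨y₀, hy₀K, hmin⟩ := hKcomp.exists_isMinOn hKne hgcont.continuousOn
  set lam := g y₀ with hlam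
  by_cases hcase : lam ≤ 1
  · refine ⟨y₀, fun p hp => ?_⟩
    have h1 : ‖y₀ - p.2‖ / ‖x - p.1‖ ≤ lam :=
      Finset.le_sup' (fun p => ‖y₀ - p.2‖ / ‖x - p.1‖) hp
    rw [← div_le_one (hrpos p hp)]
    exact le_trans h1 hcase
  exfalso
  push_neg at hcase
  set A : Finset (E × F) := T.filter (fun p => ‖y₀ - p.2‖ / ‖x - p.1‖ = lam) with hA
  have hAsub : A ⊆ T := Finset.filter_subset _ _
  obtain ⟨pm, hpmT, hpm⟩ := Finset.exists_mem_eq_sup' hTne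
    (fun p => ‖y₀ - p.2‖ / ‖x - p.1‖)
  have hAne : A.Nonempty := ⟨pm, Finset.mem_filter.2 ⟨hpmT, hpm.symm⟩⟩
  set KA : Set F := convexHull ℝ ↑(A.image Prod.snd) with hKA
  have hKAconv : Convex ℝ KA := convex_convexHull _ _
  have hKAcomp : IsCompact KA := (A.image Prod.snd).finite_toSet.isCompact_convexHull ℝ
  have hKAne : KA.Nonempty :=
    Set.Nonempty.mono (subset_convexHull ℝ _) (by simpa using hAne.image Prod.snd)
  have hKAK : KA ⊆ K := convexHull_mono (by
    intro z hz
    simp only [Finset.coe_image] at hz ⊢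
    exact Set.image_mono (by exact_mod_cast hAsub) hz)
  obtain ⟨c, hcKA, hcmin⟩ :=
    exists_norm_eq_iInf_of_complete_convex hKAne hKAcomp.isComplete hKAconv y₀
  have hproj : ∀ w ∈ KA, ⟪y₀ - c, w - c⟫ ≤ 0 :=
    (norm_eq_iInf_iff_real_inner_le_zero hKAconv hcKA).1 hcmin
  -- Step 1 : the minimizer lies in the hull of the active points, i.e. c = y₀.
  have hcy : c = y₀ := by
    by_contra hne
    have hcpos : 0 < ‖c - y₀‖ := norm_sub_pos_iff.2 hne
    have hkey : ∀ p ∈ A, ‖c - y₀‖ ^ 2 ≤ ⟪c - y₀, p.2 - y₀⟫ := by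
      intro p hp
      have hp2 : p.2 ∈ KA :=
        subset_convexHull ℝ _ (by exact_mod_cast Finset.mem_image_of_mem Prod.snd hp)
      have h1 : ⟪y₀ - c, p.2 - c⟫ ≤ 0 := hproj _ hp2
      have h2 : 0 ≤ ⟪c - y₀, p.2 - c⟫ := by
        rw [show (c - y₀ : F) = -(y₀ - c) by abel, inner_neg_left]; linarith
      have h4 : ⟪c - y₀, p.2 - y₀⟫ = ⟪c - y₀, p.2 - c⟫ + ⟪c - y₀, c - y₀⟫ := by
        rw [← inner_add_right]; congr 1; abel
      rw [h4, real_inner_self_eq_norm_sq]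
      linarith
    have hthresh : ∀ p : E × F, ∃ t₀ : ℝ, t₀ ∈ Set.Ioc (0:ℝ) 1 ∧ (p ∈ T →
        ∀ t ∈ Set.Ioc (0:ℝ) t₀, ‖(y₀ + t • (c - y₀)) - p.2‖ / ‖x - p.1‖ < lam) := by
      intro p
      by_cases hpT : p ∈ T
      swap
      · exact ⟨1, ⟨zero_lt_one, le_refl 1⟩, fun h => absurd h hpT⟩
      by_cases hpA : p ∈ A
      · refine ⟨1, ⟨zero_lt_one, le_refl 1⟩, fun _ t ht => ?_⟩
        obtain ⟨ht0, ht1⟩ := ht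
        have hiner : ⟪y₀ - p.2, c - y₀⟫ ≤ -‖c - y₀‖ ^ 2 := by
          have := hkey p hpA
          have hflip : ⟪y₀ - p.2, c - y₀⟫ = -⟪c - y₀, p.2 - y₀⟫ := by
            rw [show (y₀ - p.2 : F) = -(p.2 - y₀) by abel, inner_neg_left, real_inner_comm]
          linarith [hflip ▸ neg_le_neg (hkey p hpA)]
        have hsq : ‖(y₀ + t • (c - y₀)) - p.2‖ ^ 2
            = ‖y₀ - p.2‖ ^ 2 + 2 * (t * ⟪y₀ - p.2, c - y₀⟫) + t ^ 2 * ‖c - y₀‖ ^ 2 := by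
          rw [show (y₀ + t • (c - y₀)) - p.2 = (y₀ - p.2) + t • (c - y₀) by abel,
            norm_add_sq_real, real_inner_smul_right, norm_smul]
          simp [abs_of_pos ht0]
          ring
        have hlt2 : ‖(y₀ + t • (c - y₀)) - p.2‖ ^ 2 < ‖y₀ - p.2‖ ^ 2 := by
          rw [hsq]
          nlinarith [mul_pos ht0 (mul_pos (sub_pos.2 (lt_of_le_of_lt ht1 (by norm_num : (1:ℝ) < 2))) (mul_pos hcpos hcpos))]
        have hlt : ‖(y₀ + t • (c - y₀)) - p.2‖ < ‖y₀ - p.2‖ :=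
          lt_of_pow_lt_pow_left₀ 2 (norm_nonneg _) hlt2
        have heq : ‖y₀ - p.2‖ / ‖x - p.1‖ = lam := (Finset.mem_filter.1 hpA).2
        calc ‖(y₀ + t • (c - y₀)) - p.2‖ / ‖x - p.1‖
            < ‖y₀ - p.2‖ / ‖x - p.1‖ :=
              div_lt_div_of_pos_right hlt (hrpos p hpT)
          _ = lam := heq
      · -- inactive
        have hle : ‖y₀ - p.2‖ / ‖x - p.1‖ ≤ lam :=
          Finset.le_sup' (fun p => ‖y₀ - p.2‖ / ‖x - p.1‖) hpT
        have hlt : ‖y₀ - p.2‖ / ‖x - p.1‖ < lam :=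
          lt_of_le_of_ne hle (fun h => hpA (Finset.mem_filter.2 ⟨hpT, h⟩))
        have hrp := hrpos p hpT
        set δ := (lam * ‖x - p.1‖ - ‖y₀ - p.2‖) / (2 * ‖c - y₀‖) with hδ
        have hδpos : 0 < δ := by
          apply div_pos
          · rw [div_lt_iff₀ hrp] at hlt; linarith
          · linarith
        refine ⟨min 1 δ, ⟨lt_min zero_lt_one hδpos, min_le_left _ _⟩, fun _ t ht => ?_⟩
        obtain ⟨ht0, ht1⟩ := ht
        have htδ : t ≤ δ := le_trans ht1 (min_le_right _ _)
        have hnorm : ‖(y₀ + t • (c - y₀)) - p.2‖ ≤ ‖y₀ - p.2‖ + t * ‖c - y₀‖ := by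
          rw [show (y₀ + t • (c - y₀)) - p.2 = (y₀ - p.2) + t • (c - y₀) by abel]
          refine le_trans (norm_add_le _ _) ?_
          rw [norm_smul]
          simp [abs_of_pos ht0]
        rw [div_lt_iff₀ hrp]
        have : t * ‖c - y₀‖ ≤ δ * ‖c - y₀‖ := by
          apply mul_le_mul_of_nonneg_right htδ (norm_nonneg _)
        have hδc : δ * ‖c - y₀‖ = (lam * ‖x - p.1‖ - ‖y₀ - p.2‖) / 2 := by
          rw [hδ]; field_simp
        rw [div_lt_iff₀ hrp] at hlt
        nlinarith
    choose tf htf0 htflt using hthresh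
    set t := T.inf' hTne tf with htdef
    have ht0 : 0 < t := (Finset.lt_inf'_iff hTne).2 fun p _ => (htf0 p).1
    have ht1 : t ≤ 1 := le_trans (Finset.inf'_le tf hpmT) (htf0 pm).2
    have hytK : y₀ + t • (c - y₀) ∈ K := by
      have hcK : c ∈ K := hKAK hcKA
      have := hKconv hy₀K hcK (by linarith : (0:ℝ) ≤ 1 - t) (le_of_lt ht0) (by ring)
      convert this using 1
      module
    have hglt : g (y₀ + t • (c - y₀)) < lam := by
      rw [hg]
      rw [Finset.sup'_lt_iff]
      intro p hp
      exact htflt p hp t ⟨ht0, Finset.inf'_le tf hp⟩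
    exact absurd (hmin hytK) (not_le.2 hglt)
  -- Step 2 : contradiction via the inner product computation.
  have hy₀KA : y₀ ∈ KA := hcy ▸ hcKA
  set S := A.image Prod.snd with hS
  rw [hKA, Finset.convexHull_eq] at hy₀KA
  obtain ⟨w, hw0, hw1, hwc⟩ := hy₀KA
  rw [Finset.centerMass_eq_of_sum_1 _ _ hw1] at hwc
  simp only [id] at hwc
  have hpre : ∀ z : F, ∃ e : E, z ∈ S → (e, z) ∈ A := by
    intro z
    by_cases hz : z ∈ S
    · obtain ⟨p, hpA, hpz⟩ := Finset.mem_image.1 hz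
      exact ⟨p.1, fun _ => by rwa [show (p.1, z) = p from by rw [← hpz]]⟩
    · exact ⟨x, fun h => absurd h hz⟩
  choose q hq using hpre
  have hqA : ∀ z ∈ S, (q z, z) ∈ A := fun z hz => hq z hz
  have hqT : ∀ z ∈ S, (q z, z) ∈ T := fun z hz => hAsub (hqA z hz)
  set R : F → ℝ := fun z => ‖x - q z‖ with hR
  have hRpos : ∀ z ∈ S, 0 < R z := fun z hz => hrpos _ (hqT z hz)
  have hact : ∀ z ∈ S, ‖y₀ - z‖ = lam * R z := by
    intro z hz
    have h := (Finset.mem_filter.1 (hqA z hz)).2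
    rw [div_eq_iff (ne_of_gt (hRpos z hz))] at h
    rw [h]
  have hpairwise : ∀ z ∈ S, ∀ z' ∈ S, ‖z - z'‖ ≤ ‖q z - q z'‖ :=
    fun z hz z' hz' => hT _ (hqT z hz) _ (hqT z' hz')
  have hzero : ∑ z ∈ S, w z • (z - y₀) = 0 := by
    have h : ∑ z ∈ S, w z • (z - y₀) = (∑ z ∈ S, w z • z) - (∑ z ∈ S, w z) • y₀ := by
      rw [Finset.sum_smul, ← Finset.sum_sub_distrib]
      exact Finset.sum_congr rfl fun z _ => smul_sub _ _ _
    rw [h, hwc, hw1, one_smul, sub_self]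
  have hdouble : ∑ z ∈ S, ∑ z' ∈ S, w z * w z' * ⟪z - y₀, z' - y₀⟫ = 0 := by
    have h : ∑ z ∈ S, ∑ z' ∈ S, w z * w z' * ⟪z - y₀, z' - y₀⟫
        = ⟪∑ z ∈ S, w z • (z - y₀), ∑ z' ∈ S, w z' • (z' - y₀)⟫ := by
      rw [sum_inner]
      refine Finset.sum_congr rfl fun z hz => ?_
      rw [real_inner_smul_left, inner_sum, Finset.mul_sum]
      refine Finset.sum_congr rfl fun z' hz' => ?_
      rw [real_inner_smul_right]; ring
    rw [h, hzero, inner_zero_left]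
  set vE := ∑ z ∈ S, w z • (q z - x) with hvE
  have hdouble2 : ∑ z ∈ S, ∑ z' ∈ S, w z * w z' * ⟪q z - x, q z' - x⟫ = ⟪vE, vE⟫ := by
    rw [hvE, sum_inner]
    refine Finset.sum_congr rfl fun z hz => ?_
    rw [real_inner_smul_left, inner_sum, Finset.mul_sum]
    refine Finset.sum_congr rfl fun z' hz' => ?_
    rw [real_inner_smul_right]; ring
  have hterm : ∀ z ∈ S, ∀ z' ∈ S,
      w z * w z' * ((lam^2 - 1) * (R z^2 + R z'^2) + 2 * ⟪q z - x, q z' - x⟫)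
        ≤ w z * w z' * (2 * ⟪z - y₀, z' - y₀⟫) := by
    intro z hz z' hz'
    apply mul_le_mul_of_nonneg_left _ (mul_nonneg (hw0 z hz) (hw0 z' hz'))
    have e1 : ‖z - z'‖^2 = ‖z - y₀‖^2 - 2*⟪z - y₀, z' - y₀⟫ + ‖z' - y₀‖^2 := by
      have h := norm_sub_sq_real (z - y₀) (z' - y₀)
      rw [show (z - y₀) - (z' - y₀) = z - z' from by abel] at h
      linarith [h]
    have e2 : ‖q z - q z'‖^2 = R z^2 - 2*⟪q z - x, q z' - x⟫ + R z'^2 := by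
      have h := norm_sub_sq_real (q z - x) (q z' - x)
      rw [show (q z - x) - (q z' - x) = q z - q z' from by abel] at h
      rw [hR]
      simp only [norm_sub_rev x (q z), norm_sub_rev x (q z')]
      linarith [h]
    have e3 : ‖z - y₀‖ = lam * R z := by rw [norm_sub_rev]; exact hact z hz
    have e4 : ‖z' - y₀‖ = lam * R z' := by rw [norm_sub_rev]; exact hact z' hz'
    have e5 : ‖z - z'‖^2 ≤ ‖q z - q z'‖^2 := by
      have h := hpairwise z hz z' hz'
      nlinarith [norm_nonneg (z - z')]
    have e3sq : ‖z - y₀‖^2 = lam^2 * R z^2 := by rw [e3]; ring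
    have e4sq : ‖z' - y₀‖^2 = lam^2 * R z'^2 := by rw [e4]; ring
    linarith [e1, e2, e3sq, e4sq, e5]
  have hsum : ∑ z ∈ S, ∑ z' ∈ S,
      w z * w z' * ((lam^2 - 1) * (R z^2 + R z'^2) + 2 * ⟪q z - x, q z' - x⟫) ≤ 0 := by
    calc ∑ z ∈ S, ∑ z' ∈ S,
        w z * w z' * ((lam^2 - 1) * (R z^2 + R z'^2) + 2 * ⟪q z - x, q z' - x⟫)
        ≤ ∑ z ∈ S, ∑ z' ∈ S, w z * w z' * (2 * ⟪z - y₀, z' - y₀⟫) :=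
        Finset.sum_le_sum fun z hz => Finset.sum_le_sum fun z' hz' => hterm z hz z' hz'
      _ = 2 * ∑ z ∈ S, ∑ z' ∈ S, w z * w z' * ⟪z - y₀, z' - y₀⟫ := by
        rw [Finset.mul_sum]
        refine Finset.sum_congr rfl fun z _ => ?_
        rw [Finset.mul_sum]
        exact Finset.sum_congr rfl fun z' _ => by ring
      _ = 0 := by rw [hdouble]; ring
  set A1 := ∑ z ∈ S, w z * R z^2 with hA1
  have hsplit : ∑ z ∈ S, ∑ z' ∈ S,
      w z * w z' * ((lam^2 - 1) * (R z^2 + R z'^2) + 2 * ⟪q z - x, q z' - x⟫)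
      = (lam^2 - 1) * A1 + ((lam^2 - 1) * A1 + 2 * ⟪vE, vE⟫) := by
    have step : ∀ z ∈ S, ∑ z' ∈ S,
        w z * w z' * ((lam^2 - 1) * (R z^2 + R z'^2) + 2 * ⟪q z - x, q z' - x⟫)
        = (lam^2 - 1) * (w z * R z^2) + ((lam^2 - 1) * (w z * A1)
            + 2 * ∑ z' ∈ S, w z * w z' * ⟪q z - x, q z' - x⟫) := by
      intro z hz
      have expand : ∀ z' ∈ S,
          w z * w z' * ((lam^2 - 1) * (R z^2 + R z'^2) + 2 * ⟪q z - x, q z' - x⟫)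
          = (lam^2 - 1) * (w z * R z^2) * w z'
            + ((lam^2 - 1) * (w z * (w z' * R z'^2))
              + 2 * (w z * w z' * ⟪q z - x, q z' - x⟫)) := fun z' _ => by ring
      rw [Finset.sum_congr rfl expand, Finset.sum_add_distrib, Finset.sum_add_distrib]
      have c1 : ∑ z' ∈ S, (lam^2 - 1) * (w z * R z^2) * w z'
          = (lam^2 - 1) * (w z * R z^2) := by
        rw [← Finset.mul_sum, hw1, mul_one]
      have c2 : ∑ z' ∈ S, (lam^2 - 1) * (w z * (w z' * R z'^2))
          = (lam^2 - 1) * (w z * A1) := by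
        rw [← Finset.mul_sum, ← Finset.mul_sum]
      have c3 : ∑ z' ∈ S, 2 * (w z * w z' * ⟪q z - x, q z' - x⟫)
          = 2 * ∑ z' ∈ S, w z * w z' * ⟪q z - x, q z' - x⟫ := by
        rw [← Finset.mul_sum]
      rw [c1, c2, c3]
    rw [Finset.sum_congr rfl step, Finset.sum_add_distrib, Finset.sum_add_distrib]
    have d1 : ∑ z ∈ S, (lam^2 - 1) * (w z * R z^2) = (lam^2 - 1) * A1 := by
      rw [← Finset.mul_sum]
    have d2 : ∑ z ∈ S, (lam^2 - 1) * (w z * A1) = (lam^2 - 1) * A1 := by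
      rw [← Finset.mul_sum, ← Finset.sum_mul, hw1, one_mul]
    have d3 : ∑ z ∈ S, 2 * ∑ z' ∈ S, w z * w z' * ⟪q z - x, q z' - x⟫
        = 2 * ⟪vE, vE⟫ := by
      rw [← Finset.mul_sum, hdouble2]
    rw [d1, d2, d3]
  have hA1pos : 0 < A1 := by
    obtain ⟨z₀, hz₀S, hz₀pos⟩ : ∃ z ∈ S, 0 < w z := by
      by_contra h
      push_neg at h
      have h0 : ∑ z ∈ S, w z = 0 :=
        Finset.sum_eq_zero fun z hz => le_antisymm (h z hz) (hw0 z hz)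
      rw [hw1] at h0; norm_num at h0
    have hterm0 : 0 < w z₀ * R z₀^2 := mul_pos hz₀pos (pow_pos (hRpos z₀ hz₀S) 2)
    exact lt_of_lt_of_le hterm0 (Finset.single_le_sum
      (fun z hz => mul_nonneg (hw0 z hz) (sq_nonneg _)) hz₀S)
  have hvE0 : (0:ℝ) ≤ ⟪vE, vE⟫ := real_inner_self_nonneg
  have hl2 : 0 < lam^2 - 1 := by nlinarith [hcase]
  nlinarith [hsum, hsplit, hvE0, mul_pos hl2 hA1pos]

end

open Set Metric

theorem kirszbraun_hilbert {H₁ H₂ : Type*}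
    [NormedAddCommGroup H₁] [InnerProductSpace ℝ H₁] [CompleteSpace H₁]
    [NormedAddCommGroup H₂] [InnerProductSpace ℝ H₂] [CompleteSpace H₂]
    (Q : Set H₁) (f : H₁ → H₂) (hf : LipschitzOnWith 1 f Q) :
    ∃ F : H₁ → H₂, LipschitzWith 1 F ∧ Set.EqOn F f Q := by
  classical
  set S : Set (Set (H₁ × H₂)) :=
    {G | (∀ q ∈ Q, (q, f q) ∈ G) ∧ ∀ p ∈ G, ∀ r ∈ G, ‖p.2 - r.2‖ ≤ ‖p.1 - r.1‖} with hSdef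
  have hG₀ : (fun q => (q, f q)) '' Q ∈ S := by
    constructor
    · intro q hq; exact ⟨q, hq, rfl⟩
    · rintro p ⟨a, ha, rfl⟩ r ⟨b, hb, rfl⟩
      have h := hf.dist_le_mul a ha b hb
      simpa [dist_eq_norm] using h
  have hchainub : ∀ c ⊆ S, IsChain (· ⊆ ·) c → c.Nonempty →
      ∃ ub ∈ S, ∀ s ∈ c, s ⊆ ub := by
    rintro c hcS hchain ⟨G₁, hG₁⟩
    refine ⟨⋃₀ c, ⟨?_, ?_⟩, fun s hs => subset_sUnion_of_mem hs⟩
    · intro q hq; exact ⟨G₁, hG₁, (hcS hG₁).1 q hq⟩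
    · rintro p hp r hr
      obtain ⟨Gp, hGp, hpG⟩ := hp
      obtain ⟨Gr, hGr, hrG⟩ := hr
      rcases hchain.total hGp hGr with h | h
      · exact (hcS hGr).2 p (h hpG) r hrG
      · exact (hcS hGp).2 p hpG r (h hrG)
  obtain ⟨M, hQM, hMmax⟩ := zorn_subset_nonempty S hchainub _ hG₀
  have hMS : M ∈ S := hMmax.prop
  have htotal : ∀ x : H₁, ∃ b : H₂, (x, b) ∈ M := by
    intro x
    by_contra hxb
    push_neg at hxb
    have hxne : ∀ p ∈ M, p.1 ≠ x := by
      intro p hp h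
      exact hxb p.2 (by rw [← h]; exact hp)
    have hfin : ∀ T : Finset (H₁ × H₂), ↑T ⊆ M → ∃ y, ∀ p ∈ T, ‖y - p.2‖ ≤ ‖x - p.1‖ :=
      fun T hTM => finite_balls_inter T x (fun p hp => hxne p (hTM hp))
        (fun p hp q hq => hMS.2 p (hTM hp) q (hTM hq))
    obtain ⟨y, hy⟩ := balls_inter_of_finite M x hfin
    have hM' : insert (x, y) M ∈ S := by
      constructor
      · intro q hq; exact Set.mem_insert_of_mem _ (hMS.1 q hq)
      · rintro p hp r hr
        rcases Set.mem_insert_iff.1 hp with rfl | hp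
        · rcases Set.mem_insert_iff.1 hr with rfl | hr
          · simp
          · exact hy r hr
        · rcases Set.mem_insert_iff.1 hr with rfl | hr
          · have h := hy p hp
            calc ‖p.2 - (x, y).2‖ = ‖(x, y).2 - p.2‖ := norm_sub_rev _ _
              _ ≤ ‖(x, y).1 - p.1‖ := h
              _ = ‖p.1 - (x, y).1‖ := norm_sub_rev _ _
          · exact hMS.2 p hp r hr
    have hsub : insert (x, y) M ⊆ M := hMmax.2 hM' (Set.subset_insert _ _)
    exact hxb y (hsub (Set.mem_insert _ _))
  choose Fb hFb using htotal
  refine ⟨Fb, ?_, ?_⟩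
  · apply LipschitzWith.of_dist_le_mul
    intro a b
    have h := hMS.2 _ (hFb a) _ (hFb b)
    simpa [dist_eq_norm] using h
  · intro q hq
    have h1 := hMS.2 _ (hFb q) _ (hQM ⟨q, hq, rfl⟩)
    simp only [sub_self, norm_zero] at h1
    exact sub_eq_zero.1 (norm_le_zero_iff.1 h1)
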